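/- Let f : S × X → N be a biregular irreducible function with regularity set M and degrees (d_S, d_X), let W : X → Z be a channel with densities with respect to a reference measure μ, and let T ⊆ X × Z be a measurable set such that W_T(Z|x) > 0 for all x ∈ X. Then for every m ∈ M: 2^{D₂(Q_{f,m}W_T ‖ P_X W_T | P_S)} ≤ 1 + λ₂(f,m) · 2^{D₂(W_T ‖ P_X W_T | P_X)}. -/

import Mathlib

open MeasureTheory Filter
open scoped ENNReal

noncomputable section
/-- The second-largest eigenvalue modulus of a real matrix `P` (intended: symmetric with
row sums `1`, so that its characteristic polynomial splits over `ℝ` and the largest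
eigenvalue has the all-ones eigenvector): the eigenvalues of `P` with multiplicity are the
roots of its characteristic polynomial; we sort them increasingly, drop (one copy of) the
largest one, and take the maximum modulus of the remaining ones.  For eigenvalues
`μ₁ ≥ μ₂ ≥ ... ≥ μ_n` this is `max (|μ₂|, |μ_n|)`. -/
def secondEVmod {n : Type*} [Fintype n] [DecidableEq n] (P : Matrix n n ℝ) : ℝ :=
  ((P.charpoly.roots.sort (· ≤ ·)).dropLast.map (fun μ => |μ|)).foldr max 0

/-- The symmetric stochastic matrix `P_{f,m}` associated with `f : S × X → N` and a
message `m`, with `(x,x')` entry `|{s : f(s,x) = f(s,x') = m}| / (d_S · d_X)`. -/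
def briMatrix {S X N : Type*} [Fintype S] [DecidableEq N]
    (f : S → X → N) (m : N) (dS dX : ℕ) : Matrix X X ℝ :=
  Matrix.of fun x x' =>
    ((Finset.univ.filter fun s : S => f s x = m ∧ f s x' = m).card : ℝ) / (dS * dX)

/-- `λ₂(f,m)`: the second-largest eigenvalue modulus of the matrix `P_{f,m}`. -/
def lam2 {S X N : Type*} [Fintype S] [Fintype X] [DecidableEq X] [DecidableEq N]
    (f : S → X → N) (m : N) (dS dX : ℕ) : ℝ :=
  secondEVmod (briMatrix f m dS dX)

/-- `f : S × X → N` is a biregular irreducible function with regularity set `M` and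
degrees `(d_S, d_X)` (positive integers): for every `m ∈ M`, every `s` has exactly `d_S`
preimages `x` with `f(s,x) = m`, every `x` has exactly `d_X` preimages `s` with
`f(s,x) = m`, and the matrix `P_{f,m}` has second-largest eigenvalue modulus `< 1`. -/
structure IsBRI {S X N : Type*} [Fintype S] [Fintype X] [DecidableEq X] [DecidableEq N]
    (f : S → X → N) (M : Set N) (dS dX : ℕ) : Prop where
  dS_pos : 0 < dS
  dX_pos : 0 < dX
  regS : ∀ m ∈ M, ∀ s : S, (Finset.univ.filter fun x : X => f s x = m).card = dS
  regX : ∀ m ∈ M, ∀ x : X, (Finset.univ.filter fun s : S => f s x = m).card = dX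
  irred : ∀ m ∈ M, lam2 f m dS dX < 1
open Classical in
/-- Base-2 Kullback-Leibler divergence `D(M₁‖M₂)` of two (subnormalized) measures given by
their densities `p`, `q` with respect to the reference measure `μ`: it is
`∫ p log₂(p/q) dμ` if `μ(q = 0, p > 0) = 0` (and the integral exists), and `+∞` otherwise. -/
def klDiv2 {Z : Type*} [MeasurableSpace Z] (μ : Measure Z) (p q : Z → ℝ) : EReal :=
  if μ {z | q z = 0 ∧ 0 < p z} = 0 ∧ Integrable (fun z => p z * Real.logb 2 (p z / q z)) μ
  then ((∫ z, p z * Real.logb 2 (p z / q z) ∂μ : ℝ) : EReal) else ⊤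

open Classical in
/-- Base-2 Rényi 2-divergence `D₂(M₁‖M₂)` of two (subnormalized) measures given by their
densities `p`, `q` with respect to `μ`: `log₂ ∫ p²/q dμ` if `μ(q = 0, p > 0) = 0` (and the
integral is finite), and `+∞` otherwise. -/
def renyi2Div {Z : Type*} [MeasurableSpace Z] (μ : Measure Z) (p q : Z → ℝ) : EReal :=
  if μ {z | q z = 0 ∧ 0 < p z} = 0 ∧ Integrable (fun z => p z ^ 2 / q z) μ
  then ((Real.logb 2 (∫ z, p z ^ 2 / q z ∂μ) : ℝ) : EReal) else ⊤

/-- Conditional Kullback-Leibler divergence `D(W‖M|P) = ∑ₛ p(s) D(W(·|s)‖M)` of a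
(subnormalized) channel with densities `w s` from a (subnormalized) measure with density
`q`, with respect to the distribution with density `p` on the finite set `S`. -/
def condKL {S Z : Type*} [Fintype S] [MeasurableSpace Z] (μ : Measure Z)
    (p : S → ℝ) (w : S → Z → ℝ) (q : Z → ℝ) : EReal :=
  ∑ s : S, ((p s : ℝ) : EReal) * klDiv2 μ (w s) q

/-- Base-2 exponential function `EReal → ℝ≥0∞`. -/
def exp2 (x : EReal) : ℝ≥0∞ :=
  if x = ⊤ then ⊤ else if x = ⊥ then 0 else ENNReal.ofReal ((2 : ℝ) ^ x.toReal)

/-- Base-2 logarithm `ℝ≥0∞ → EReal`. -/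
def log2E (x : ℝ≥0∞) : EReal :=
  if x = ⊤ then ⊤ else if x = 0 then ⊥ else ((Real.logb 2 x.toReal : ℝ) : EReal)

/-- Conditional Rényi 2-divergence `D₂(W‖M|P) = log₂ ∑ₛ p(s) 2^{D₂(W(·|s)‖M)}`. -/
def condRenyi2 {S Z : Type*} [Fintype S] [MeasurableSpace Z] (μ : Measure Z)
    (p : S → ℝ) (w : S → Z → ℝ) (q : Z → ℝ) : EReal :=
  log2E (∑ s : S, ENNReal.ofReal (p s) * exp2 (renyi2Div μ (w s) q))

/-- Density (w.r.t. counting measure) of the uniform distribution on a finite set. -/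
def unif (S : Type*) [Fintype S] : S → ℝ := fun _ => 1 / (Fintype.card S : ℝ)

/-- Density of the output measure `PW` of the channel with densities `w x` under the
input distribution with density `p` on the finite set `X`. -/
def mixDensity {X Z : Type*} [Fintype X] (p : X → ℝ) (w : X → Z → ℝ) : Z → ℝ :=
  fun z => ∑ x : X, p x * w x z

/-- Density of the channel `Q_{f,m} W : S → Z`, i.e. of the concatenation of the
randomized inverse `Q_{f,m}` (with density `q_{f,m}(x|s) = (1/d_S)·1_{f(s,x)=m}`) with
the channel with densities `w x`. -/
def briChannelDensity {S X N Z : Type*} [Fintype X] [DecidableEq N]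
    (f : S → X → N) (m : N) (dS : ℕ) (w : X → Z → ℝ) : S → Z → ℝ :=
  fun s z => ∑ x : X, (if f s x = m then (1 : ℝ) / dS else 0) * w x z

/-- Density of the subnormalized channel `W_T`, obtained from the channel with densities
`w x` by restriction to a set `T ⊆ X × Z`: `w_T(z|x) = w(z|x)·1_{(x,z)∈T}`. -/
def restrictChan {X Z : Type*} (w : X → Z → ℝ) (T : Set (X × Z)) : X → Z → ℝ :=
  fun x => Set.indicator {z | (x, z) ∈ T} (w x)

/-- The `ε`-smooth conditional Rényi 2-divergence `D₂^ε(W‖P_X W|P_X)`: the infimum of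
`D₂(W_T‖P_X W_T|P_X)` over all (sectionwise measurable) `T ⊆ X × Z` with
`W({z : (x,z) ∈ T}|x) ≥ 1 − ε` for all `x`. -/
def smoothCondRenyi2 {X Z : Type*} [Fintype X] [MeasurableSpace Z] (μ : Measure Z)
    (w : X → Z → ℝ) (ε : ℝ) : EReal :=
  ⨅ T ∈ {T : Set (X × Z) | (∀ x : X, MeasurableSet {z | (x, z) ∈ T}) ∧
      ∀ x : X, 1 - ε ≤ ∫ z in {z | (x, z) ∈ T}, w x z ∂μ},
    condRenyi2 μ (unif X) (restrictChan w T) (mixDensity (unif X) (restrictChan w T))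


section SpectralAux
open Polynomial Matrix

lemma charpoly_unitary_conj {n : Type*} [Fintype n] [DecidableEq n]
    (U : Matrix.unitaryGroup n ℝ) (B : Matrix n n ℝ) :
    ((U : Matrix n n ℝ) * B * star (U : Matrix n n ℝ)).charpoly = B.charpoly := by
  set V : Matrix n n ℝ := (U : Matrix n n ℝ) with hV
  have h1 : V * star V = 1 := Matrix.mem_unitaryGroup_iff.mp U.2
  have hmap : (V * star V).map (C : ℝ →+* ℝ[X]) = 1 := by rw [h1]; simp
  have key : charmatrix (V * B * star V) =
      V.map C * charmatrix B * (star V).map C := by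
    rw [charmatrix, charmatrix]
    rw [mul_sub, sub_mul]
    congr 1
    · -- scalar part
      rw [show V.map C * Matrix.scalar n (X : ℝ[X]) = Matrix.scalar n (X : ℝ[X]) * V.map C from
        ((Matrix.scalar_commute (X : ℝ[X]) (fun r' => Commute.all _ _) (V.map C)).eq).symm,
        mul_assoc, ← Matrix.map_mul, hmap, mul_one]
    · show (C : ℝ →+* ℝ[X]).mapMatrix (V * B * star V) = _
      simp only [RingHom.mapMatrix_apply]
      rw [← Matrix.map_mul, ← Matrix.map_mul]
  have h2 : (V * B * star V).charpoly = (V.map C).det * B.charpoly * ((star V).map C).det := by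
    rw [Matrix.charpoly, key, det_mul, det_mul, Matrix.charpoly]
  rw [h2, mul_comm ((V.map C).det), mul_assoc, ← det_mul, ← Matrix.map_mul, hmap, det_one,
    mul_one]

lemma charpoly_roots_eig {n : Type*} [Fintype n] [DecidableEq n] {A : Matrix n n ℝ}
    (hA : A.IsHermitian) : A.charpoly.roots = Finset.univ.val.map hA.eigenvalues := by
  have h0 : A.charpoly = (Matrix.diagonal hA.eigenvalues).charpoly := by
    conv_lhs => rw [hA.spectral_theorem, Unitary.conjStarAlgAut_apply]
    rw [charpoly_unitary_conj]
    congr 1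
  rw [h0]
  have h1 : (Matrix.diagonal hA.eigenvalues).charpoly = ∏ i : n, (X - C (hA.eigenvalues i)) := by
    rw [Matrix.charpoly]
    have : charmatrix (Matrix.diagonal hA.eigenvalues)
        = Matrix.diagonal (fun i => (X : ℝ[X]) - C (hA.eigenvalues i)) := by
      ext i j
      by_cases h : i = j
      · subst h; simp [charmatrix_apply_eq]
      · simp [charmatrix_apply_ne _ _ _ h, Matrix.diagonal_apply_ne _ h]
    rw [this, Matrix.det_diagonal]
  rw [h1, ← roots_multiset_prod_X_sub_C (Finset.univ.val.map hA.eigenvalues), Multiset.map_map,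
    Finset.prod_eq_multiset_prod]
  rfl

-- list facts
lemma foldr_max_nonneg (l : List ℝ) : 0 ≤ l.foldr max 0 := by
  induction l with
  | nil => simp
  | cons a t ih => simpa using Or.inr ih

lemma le_foldr_max {l : List ℝ} {x : ℝ} (h : x ∈ l) : x ≤ l.foldr max 0 := by
  induction l with
  | nil => simp at h
  | cons a t ih =>
    rcases List.mem_cons.mp h with h | h
    · subst h; simp [le_max_iff]
    · simpa [le_max_iff] using Or.inr (ih h)

-- dropLast of sorted list is erase of the max
lemma sort_dropLast_eq_erase (l : Multiset ℝ) (c : ℝ) (hc : c ∈ l) (hle : ∀ x ∈ l, x ≤ c) :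
    ((l.sort (· ≤ ·)).dropLast : Multiset ℝ) = l.erase c := by
  set L := l.sort (· ≤ ·) with hL
  have hLne : L ≠ [] := by
    intro h
    have : c ∈ L := by rw [hL, Multiset.mem_sort]; exact hc
    simp [h] at this
  have hdec : L.dropLast ++ [L.getLast hLne] = L := L.dropLast_append_getLast hLne
  have hsorted : L.Pairwise (· ≤ ·) := l.pairwise_sort (· ≤ ·)
  have hlast_le : L.getLast hLne ≤ c := hle _ (by rw [← Multiset.mem_sort (· ≤ ·) (s := l)]; exact L.getLast_mem hLne)
  have hle_last : ∀ x ∈ L.dropLast, x ≤ L.getLast hLne := by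
    intro x hx
    have := hsorted
    rw [← hdec] at this
    have := (List.pairwise_append.mp this).2.2
    exact this x hx _ (List.mem_singleton_self _)
  have hlast_eq : L.getLast hLne = c := by
    have hcL : c ∈ L := by rw [hL, Multiset.mem_sort]; exact hc
    rw [← hdec] at hcL
    rcases List.mem_append.mp hcL with h | h
    · exact le_antisymm hlast_le (hle_last _ h)
    · simp at h; rw [h]
  have : (L : Multiset ℝ) = (L.dropLast : Multiset ℝ) + {c} := by
    conv_lhs => rw [← hdec]
    rw [hlast_eq]; rfl
  have hl : l = (L.dropLast : Multiset ℝ) + {c} := by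
    rw [← this, hL]; exact (l.sort_eq (· ≤ ·)).symm
  rw [hl]
  rw [show (L.dropLast : Multiset ℝ) + {c} = c ::ₘ (L.dropLast : Multiset ℝ) by
    rw [add_comm]; rfl]
  rw [Multiset.erase_cons_head]

lemma quadform_core {n : Type*} [Fintype n] [DecidableEq n] (A : Matrix n n ℝ)
    (hsym : Aᵀ = A) (hnn : ∀ i j, 0 ≤ A i j) (hrow : ∀ i, ∑ j, A i j = 1)
    (hn : 0 < Fintype.card n) (u : n → ℝ) (hu : ∑ i, u i = 0) :
    ∑ i, u i * (A *ᵥ u) i ≤ secondEVmod A * ∑ i, u i ^ 2 := by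
  have hA : A.IsHermitian := by
    rw [Matrix.IsHermitian, conjTranspose_eq_transpose_of_trivial]; exact hsym
  have hcol : ∀ k, ∑ i, A i k = 1 := by
    intro k
    have : ∀ i, A i k = A k i := by
      intro i; conv_lhs => rw [← hsym]
      rfl
    simp_rw [this]; exact hrow k
  set μ : n → ℝ := hA.eigenvalues with hμ
  set B : n → n → ℝ := fun j => ⇑(hA.eigenvectorBasis j) with hB
  have O1 : ∀ j k, ∑ i, B j i * B k i = if j = k then (1:ℝ) else 0 := by
    intro j k
    have h := (orthonormal_iff_ite (𝕜 := ℝ)).mp hA.eigenvectorBasis.orthonormal j k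
    simpa [PiLp.inner_apply, RCLike.inner_apply, starRingEnd_apply, mul_comm] using h
  have O2 : ∀ j, A *ᵥ B j = μ j • B j := fun j => hA.mulVec_eigenvectorBasis j
  have O3 : ∀ v : n → ℝ, ∀ i, v i = ∑ j, (∑ i', B j i' * v i') * B j i := by
    intro v i
    have h := hA.eigenvectorBasis.sum_repr (WithLp.toLp 2 v : EuclideanSpace ℝ n)
    have h2 := congrFun (congrArg (fun (x : EuclideanSpace ℝ n) => (x : n → ℝ)) h) i
    simp only [OrthonormalBasis.repr_apply_apply, PiLp.inner_apply, RCLike.inner_apply,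
      starRingEnd_apply] at h2
    rw [← h2]
    simp only [star_trivial]
    have hsum : ∀ (g : n → EuclideanSpace ℝ n), (∑ x, g x) i = ∑ x, g x i :=
      fun g => by simp
    rw [hsum]
    simp only [PiLp.smul_apply, smul_eq_mul, hB, mul_comm]
  have hpar : ∀ v w : n → ℝ, ∑ i, v i * w i
      = ∑ j, (∑ i, B j i * v i) * (∑ i, B j i * w i) := by
    intro v w
    calc ∑ i, v i * w i = ∑ i, (∑ j, (∑ i', B j i' * v i') * B j i) * w i :=
          Finset.sum_congr rfl fun i _ => by rw [← O3 v i]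
      _ = ∑ i, ∑ j, (∑ i', B j i' * v i') * (B j i * w i) := by
          simp_rw [Finset.sum_mul, mul_assoc]
      _ = ∑ j, ∑ i, (∑ i', B j i' * v i') * (B j i * w i) := Finset.sum_comm
      _ = _ := by simp_rw [← Finset.mul_sum]
  set c : n → ℝ := fun j => ∑ i, B j i * u i with hc
  set d : n → ℝ := fun j => ∑ i, B j i with hd
  have step2 : ∑ i, u i ^ 2 = ∑ j, c j ^ 2 := by
    simpa [pow_two] using hpar u u
  have hone : ∀ j, ∑ i, B j i * (1:ℝ) = d j := by intro j; simp [hd]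
  have hd2 : (Fintype.card n : ℝ) = ∑ j, d j ^ 2 := by
    have := hpar (fun _ => 1) (fun _ => 1)
    simpa [pow_two, hd] using this
  have hdc : ∑ j, d j * c j = 0 := by
    have := hpar (fun _ => 1) u
    simp only [one_mul, mul_one] at this
    rw [hu] at this
    rw [← this]
  have hAu : ∀ (v : n → ℝ) i, (A *ᵥ v) i = ∑ k, A i k * v k := by
    intro v i; simp [Matrix.mulVec, dotProduct]
  have hABj : ∀ j i, ∑ k, A i k * B j k = μ j * B j i := by
    intro j i
    have := congrFun (O2 j) i
    rw [hAu (B j) i] at this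
    simpa using this
  have step1 : ∑ i, u i * (A *ᵥ u) i = ∑ j, μ j * c j ^ 2 := by
    have hAu2 : ∀ i, (A *ᵥ u) i = ∑ j, c j * (μ j * B j i) := by
      intro i
      rw [hAu u i]
      calc ∑ k, A i k * u k = ∑ k, A i k * ∑ j, c j * B j k :=
            Finset.sum_congr rfl fun k _ => by rw [← O3 u k]
        _ = ∑ k, ∑ j, c j * (A i k * B j k) := by
            simp_rw [Finset.mul_sum]; exact Finset.sum_congr rfl fun k _ =>
              Finset.sum_congr rfl fun j _ => by ring
        _ = ∑ j, c j * ∑ k, (A i k * B j k) := by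
            rw [Finset.sum_comm]; simp_rw [← Finset.mul_sum]
        _ = _ := by simp_rw [hABj]
    calc ∑ i, u i * (A *ᵥ u) i = ∑ i, ∑ j, c j * μ j * (B j i * u i) := by
          simp_rw [hAu2, Finset.mul_sum]
          exact Finset.sum_congr rfl fun i _ => Finset.sum_congr rfl fun j _ => by ring
      _ = ∑ j, c j * μ j * ∑ i, B j i * u i := by
          rw [Finset.sum_comm]; simp_rw [← Finset.mul_sum]
      _ = _ := Finset.sum_congr rfl fun j _ => by
          have hcj : (∑ i, B j i * u i) = c j := rfl
          rw [hcj]; ring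
  have step3 : ∀ j, μ j * d j = d j := by
    intro j
    have h1 : ∑ i, (A *ᵥ B j) i = μ j * d j := by
      rw [O2 j]; simp [hd, Finset.mul_sum]
    have h2 : ∑ i, (A *ᵥ B j) i = d j := by
      calc ∑ i, (A *ᵥ B j) i = ∑ i, ∑ k, A i k * B j k := by simp_rw [hAu]
        _ = ∑ k, (∑ i, A i k) * B j k := by
            rw [Finset.sum_comm]; simp_rw [Finset.sum_mul]
        _ = ∑ k, B j k := Finset.sum_congr rfl fun k _ => by rw [hcol k, one_mul]
        _ = d j := rfl
    rw [← h1, h2]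
  have hexj : ∃ j₀, d j₀ ≠ 0 := by
    by_contra h
    push_neg at h
    simp only [h] at hd2
    simp at hd2
    exact (Nat.cast_pos.mpr hn).ne' hd2
  obtain ⟨j₀, hj₀⟩ := hexj
  have hμj₀ : μ j₀ = 1 := by
    have h3 := step3 j₀
    have : (μ j₀ - 1) * d j₀ = 0 := by ring_nf; linarith [h3]
    rcases mul_eq_zero.mp this with h | h
    · linarith
    · exact absurd h hj₀
  have hperron : ∀ j, |μ j| ≤ 1 := by
    intro j
    have hne : (Finset.univ : Finset n).Nonempty := Finset.univ_nonempty_iff.mpr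
      (Fintype.card_pos_iff.mp hn)
    obtain ⟨i₀, -, hi₀⟩ := Finset.exists_max_image Finset.univ (fun i => |B j i|) hne
    have hBne : ∃ i, B j i ≠ 0 := by
      by_contra h
      push_neg at h
      have := O1 j j
      simp only [h, mul_zero, Finset.sum_const_zero, if_pos rfl] at this
      norm_num at this
    obtain ⟨i₁, hi₁⟩ := hBne
    have hpos : 0 < |B j i₀| := lt_of_lt_of_le (abs_pos.mpr hi₁) (hi₀ i₁ (Finset.mem_univ _))
    have hkey : |μ j| * |B j i₀| ≤ |B j i₀| := by
      have h1 : |μ j * B j i₀| = |(A *ᵥ B j) i₀| := by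
        rw [O2 j]; simp [abs_mul]
      calc |μ j| * |B j i₀| = |μ j * B j i₀| := (abs_mul _ _).symm
        _ = |(A *ᵥ B j) i₀| := h1
        _ = |∑ k, A i₀ k * B j k| := by rw [hAu]
        _ ≤ ∑ k, |A i₀ k * B j k| := Finset.abs_sum_le_sum_abs _ _
        _ ≤ ∑ k, A i₀ k * |B j i₀| := by
            apply Finset.sum_le_sum
            intro k _
            rw [abs_mul, abs_of_nonneg (hnn i₀ k)]
            exact mul_le_mul_of_nonneg_left (hi₀ k (Finset.mem_univ _)) (hnn i₀ k)
        _ = |B j i₀| := by rw [← Finset.sum_mul, hrow, one_mul]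
    exact le_of_mul_le_mul_right (by linarith [hkey]) hpos
  -- multiset part
  have hjmem : j₀ ∈ Finset.univ.val := Finset.mem_univ j₀
  have hjmem' : ∀ {j : n}, j ∈ Finset.univ.val := fun {j} => Finset.mem_univ j
  set l : Multiset ℝ := Finset.univ.val.map μ with hlrm
  have hr : A.charpoly.roots = l := charpoly_roots_eig hA
  have hl : l = (1:ℝ) ::ₘ ((Finset.univ.val.erase j₀).map μ) := by
    conv_lhs => rw [hlrm, ← Multiset.cons_erase hjmem]
    rw [Multiset.map_cons, hμj₀]
  have hmax : ∀ x ∈ l, x ≤ 1 := by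
    intro x hx
    obtain ⟨j, -, rfl⟩ := Multiset.mem_map.mp hx
    exact le_trans (le_abs_self _) (hperron j)
  have h1l : (1:ℝ) ∈ l := by rw [hl]; exact Multiset.mem_cons_self _ _
  have herase : ((l.sort (· ≤ ·)).dropLast : Multiset ℝ) = l.erase 1 :=
    sort_dropLast_eq_erase l 1 h1l hmax
  have heq : l.erase 1 = (Finset.univ.val.erase j₀).map μ := by
    rw [hl, Multiset.erase_cons_head]
  have hbound : ∀ x : ℝ, x ∈ l.erase 1 → |x| ≤ secondEVmod A := by
    intro x hx
    rw [← herase, Multiset.mem_coe] at hx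
    have : |x| ∈ (l.sort (· ≤ ·)).dropLast.map (fun μ => |μ|) := List.mem_map_of_mem hx
    have h2 := le_foldr_max this
    rw [secondEVmod, hr]
    exact h2
  have hsnn : 0 ≤ secondEVmod A := by rw [secondEVmod]; exact foldr_max_nonneg _
  have hmemerase : ∀ j, j ≠ j₀ → μ j ∈ l.erase 1 := by
    intro j hj
    rw [heq]
    exact Multiset.mem_map_of_mem μ ((Multiset.mem_erase_of_ne hj).mpr hjmem')
  rw [step1, step2]
  by_cases hex : ∃ j₁, j₁ ≠ j₀ ∧ μ j₁ = 1
  · obtain ⟨j₁, hj₁, hμ₁⟩ := hex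
    have h1le : 1 ≤ secondEVmod A := by
      have := hbound _ (hmemerase j₁ hj₁)
      rwa [hμ₁, abs_one] at this
    calc ∑ j, μ j * c j ^ 2 ≤ ∑ j, c j ^ 2 := by
          apply Finset.sum_le_sum
          intro j _
          nlinarith [sq_nonneg (c j), le_trans (le_abs_self _) (hperron j)]
      _ ≤ secondEVmod A * ∑ j, c j ^ 2 := by
          nlinarith [Finset.sum_nonneg (fun j (_ : j ∈ Finset.univ) => sq_nonneg (c j))]
  · push_neg at hex
    have hdz : ∀ j, j ≠ j₀ → d j = 0 := by
      intro j hj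
      have h3 := step3 j
      have : (μ j - 1) * d j = 0 := by ring_nf; linarith [h3]
      rcases mul_eq_zero.mp this with h | h
      · exact absurd (by linarith : μ j = 1) (hex j hj)
      · exact h
    have hcj₀ : c j₀ = 0 := by
      have hsum : ∑ j, d j * c j = d j₀ * c j₀ := by
        apply Finset.sum_eq_single j₀
        · intro j _ hj; rw [hdz j hj, zero_mul]
        · intro h; exact absurd (Finset.mem_univ j₀) h
      rw [hdc] at hsum
      rcases mul_eq_zero.mp hsum.symm with h | h
      · exact absurd h hj₀
      · exact h
    rw [Finset.mul_sum]
    apply Finset.sum_le_sum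
    intro j _
    by_cases hj : j = j₀
    · subst hj; rw [hcj₀]; simp
    · have := hbound _ (hmemerase j hj)
      nlinarith [sq_nonneg (c j), le_trans (le_abs_self (μ j)) this]

lemma quadform_bound {n : Type*} [Fintype n] [DecidableEq n] (A : Matrix n n ℝ)
    (hsym : Aᵀ = A) (hnn : ∀ i j, 0 ≤ A i j) (hrow : ∀ i, ∑ j, A i j = 1)
    (hn : 0 < Fintype.card n) (v : n → ℝ) :
    ∑ i, v i * (A *ᵥ v) i ≤ (∑ i, v i) ^ 2 / (Fintype.card n : ℝ)
      + secondEVmod A * (∑ i, v i ^ 2 - (∑ i, v i) ^ 2 / (Fintype.card n : ℝ)) := by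
  have hcol : ∀ k, ∑ i, A i k = 1 := by
    intro k
    have h : ∀ i, A i k = A k i := by
      intro i; conv_lhs => rw [← hsym]
      rfl
    simp_rw [h]; exact hrow k
  set N : ℝ := (Fintype.card n : ℝ) with hN
  have hN0 : 0 < N := Nat.cast_pos.mpr hn
  set t : ℝ := (∑ i, v i) / N with ht
  set u : n → ℝ := fun i => v i - t with hudef
  have hvu : ∀ i, v i = u i + t := fun i => by simp [hudef]
  have hsumu : ∑ i, u i = 0 := by
    simp only [hudef]
    rw [Finset.sum_sub_distrib, Finset.sum_const, Finset.card_univ, nsmul_eq_mul, ht]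
    field_simp
    simp [hN]
  have hAv : ∀ i, (A *ᵥ v) i = (A *ᵥ u) i + t := by
    intro i
    have h1 : ∀ (x : n → ℝ) i, (A *ᵥ x) i = ∑ k, A i k * x k := by
      intro x i; simp [Matrix.mulVec, dotProduct]
    rw [h1, h1]
    calc ∑ k, A i k * v k = ∑ k, (A i k * u k + t * A i k) := by
          apply Finset.sum_congr rfl; intro k _; rw [hvu k]; ring
      _ = (∑ k, A i k * u k) + t * ∑ k, A i k := by
          rw [Finset.sum_add_distrib, Finset.mul_sum]
      _ = (∑ k, A i k * u k) + t := by rw [hrow, mul_one]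
  have hsumAu : ∑ i, (A *ᵥ u) i = 0 := by
    have h1 : ∀ (x : n → ℝ) i, (A *ᵥ x) i = ∑ k, A i k * x k := by
      intro x i; simp [Matrix.mulVec, dotProduct]
    calc ∑ i, (A *ᵥ u) i = ∑ i, ∑ k, A i k * u k := by simp_rw [h1]
      _ = ∑ k, (∑ i, A i k) * u k := by rw [Finset.sum_comm]; simp_rw [Finset.sum_mul]
      _ = ∑ k, u k := Finset.sum_congr rfl fun k _ => by rw [hcol, one_mul]
      _ = 0 := hsumu
  have hvAv : ∑ i, v i * (A *ᵥ v) i = (∑ i, u i * (A *ᵥ u) i) + N * t ^ 2 := by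
    calc ∑ i, v i * (A *ᵥ v) i
        = ∑ i, (u i * (A *ᵥ u) i + t * (A *ᵥ u) i + t * u i + t ^ 2) := by
          apply Finset.sum_congr rfl; intro i _; rw [hvu i, hAv i]; ring
      _ = (∑ i, u i * (A *ᵥ u) i) + t * (∑ i, (A *ᵥ u) i) + t * (∑ i, u i) + N * t ^ 2 := by
          rw [Finset.sum_add_distrib, Finset.sum_add_distrib, Finset.sum_add_distrib,
            Finset.sum_const, Finset.card_univ, nsmul_eq_mul, ← Finset.mul_sum, ← Finset.mul_sum]
          try ring
      _ = _ := by rw [hsumAu, hsumu]; ring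
  have hv2 : ∑ i, v i ^ 2 = (∑ i, u i ^ 2) + N * t ^ 2 := by
    calc ∑ i, v i ^ 2 = ∑ i, (u i ^ 2 + 2 * t * u i + t ^ 2) := by
          apply Finset.sum_congr rfl; intro i _; rw [hvu i]; ring
      _ = (∑ i, u i ^ 2) + 2 * t * (∑ i, u i) + N * t ^ 2 := by
          rw [Finset.sum_add_distrib, Finset.sum_add_distrib, Finset.sum_const,
            Finset.card_univ, nsmul_eq_mul, ← Finset.mul_sum]
          try ring
      _ = _ := by rw [hsumu]; ring
  have hsv : (∑ i, v i) ^ 2 / N = N * t ^ 2 := by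
    rw [ht]; field_simp
  have hcore := quadform_core A hsym hnn hrow hn u hsumu
  rw [hvAv, hv2, hsv]
  linarith [hcore]

end SpectralAux


section AnalyticAux

lemma exp2_log2E (x : ℝ≥0∞) : exp2 (log2E x) = x := by
  rcases eq_or_ne x ⊤ with rfl | hxt
  · simp [log2E, exp2]
  rcases eq_or_ne x 0 with rfl | hx0
  · simp [log2E, exp2]
  have hpos : 0 < x.toReal := ENNReal.toReal_pos hx0 hxt
  rw [log2E, if_neg hxt, if_neg hx0, exp2, if_neg (by exact EReal.coe_ne_top _),
    if_neg (by exact EReal.coe_ne_bot _)]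
  rw [EReal.toReal_coe, Real.rpow_logb two_pos (by norm_num) hpos, ENNReal.ofReal_toReal hxt]

lemma exp2_renyi2Div {Z : Type*} [MeasurableSpace Z] (μ : Measure Z) (p q : Z → ℝ)
    (hnull : μ {z | q z = 0 ∧ 0 < p z} = 0)
    (hint : MeasureTheory.Integrable (fun z => p z ^ 2 / q z) μ)
    (hpos : 0 < ∫ z, p z ^ 2 / q z ∂μ) :
    exp2 (renyi2Div μ p q) = ENNReal.ofReal (∫ z, p z ^ 2 / q z ∂μ) := by
  rw [renyi2Div, if_pos ⟨hnull, hint⟩, exp2, if_neg (by exact EReal.coe_ne_top _),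
    if_neg (by exact EReal.coe_ne_bot _), EReal.toReal_coe,
    Real.rpow_logb two_pos (by norm_num) hpos]

end AnalyticAux

set_option maxHeartbeats 4000000 in
/-- **Lemma 10 of the paper.** For a biregular irreducible function `f`
with regularity set `M`, a channel `W : X → Z` and a (sectionwise measurable) set
`T ⊆ X × Z` with `W_T(Z|x) > 0` for all `x`, every `m ∈ M` satisfies
`2^{D₂(Q_{f,m}W_T ‖ P_X W_T | P_S)} ≤ 1 + λ₂(f,m)·2^{D₂(W_T ‖ P_X W_T | P_X)}`. -/
theorem stmt_13 {S X N Z : Type*} [Fintype S] [Fintype X] [DecidableEq X] [DecidableEq N]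
    [MeasurableSpace Z] (μ : Measure Z)
    (f : S → X → N) (M : Set N) (dS dX : ℕ) (hf : IsBRI f M dS dX)
    (w : X → Z → ℝ) (hw_meas : ∀ x, Measurable (w x)) (hw0 : ∀ x z, 0 ≤ w x z)
    (hw1 : ∀ x, (∫ z, w x z ∂μ) = 1)
    (T : Set (X × Z)) (hTmeas : ∀ x : X, MeasurableSet {z | (x, z) ∈ T})
    (hTpos : ∀ x : X, 0 < ∫ z, restrictChan w T x z ∂μ)
    (m : N) (hm : m ∈ M) :
    exp2 (condRenyi2 μ (unif S) (briChannelDensity f m dS (restrictChan w T))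
        (mixDensity (unif X) (restrictChan w T)))
      ≤ 1 + ENNReal.ofReal (lam2 f m dS dX) *
          exp2 (condRenyi2 μ (unif X) (restrictChan w T)
            (mixDensity (unif X) (restrictChan w T))) := by
  classical
  rcases isEmpty_or_nonempty S with hS | hS
  · have h0 : exp2 (condRenyi2 μ (unif S) (briChannelDensity f m dS (restrictChan w T))
        (mixDensity (unif X) (restrictChan w T))) = 0 := by
      simp [condRenyi2, log2E, exp2]
    rw [h0]; exact zero_le
  obtain ⟨s₀⟩ := hS
  have hX : Nonempty X := by
    by_contra hX
    rw [not_nonempty_iff] at hX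
    have h := hf.regS m hm s₀
    simp only [Finset.univ_eq_empty, Finset.filter_empty, Finset.card_empty] at h
    exact absurd h.symm hf.dS_pos.ne'
  -- abbreviations
  set wt : X → Z → ℝ := restrictChan w T with hwtdef
  set q : Z → ℝ := mixDensity (unif X) wt with hqdef
  set p : S → Z → ℝ := briChannelDensity f m dS wt with hpdef
  set lam : ℝ := lam2 f m dS dX with hlamdef
  set cX : ℝ := (Fintype.card X : ℝ) with hcXdef
  set cS : ℝ := (Fintype.card S : ℝ) with hcSdef
  have hcX : 0 < cX := by
    rw [hcXdef]; exact_mod_cast Fintype.card_pos_iff.mpr hX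
  have hcS : 0 < cS := by
    rw [hcSdef]; exact_mod_cast Fintype.card_pos_iff.mpr ⟨s₀⟩
  have hdS : (0:ℝ) < dS := by exact_mod_cast hf.dS_pos
  have hdX : (0:ℝ) < dX := by exact_mod_cast hf.dX_pos
  have hlam0 : 0 ≤ lam := by
    rw [hlamdef, lam2, secondEVmod]; exact foldr_max_nonneg _
  have hlam1 : lam < 1 := hf.irred m hm
  set Pm := briMatrix f m dS dX with hPdef
  have hPapp : ∀ x x' : X, Pm x x'
      = ((Finset.univ.filter fun s : S => f s x = m ∧ f s x' = m).card : ℝ) / (dS * dX) := by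
    intro x x'; rfl
  -- matrix facts
  have hsym : Pm.transpose = Pm := by
    ext x x'
    rw [Matrix.transpose_apply, hPapp, hPapp]
    have he : (Finset.univ.filter fun s : S => f s x' = m ∧ f s x = m)
        = (Finset.univ.filter fun s : S => f s x = m ∧ f s x' = m) := by
      ext s; simp only [Finset.mem_filter]; tauto
    rw [he]
  have hnn : ∀ x x' : X, 0 ≤ Pm x x' := by
    intro x x'; rw [hPapp]; positivity
  have hrowNat : ∀ x : X,
      ∑ x' : X, (Finset.univ.filter fun s : S => f s x = m ∧ f s x' = m).card = dX * dS := by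
    intro x
    calc ∑ x' : X, (Finset.univ.filter fun s : S => f s x = m ∧ f s x' = m).card
        = ∑ x' : X, ∑ s : S, if f s x = m ∧ f s x' = m then 1 else 0 := by
          simp_rw [Finset.card_filter]
      _ = ∑ s : S, ∑ x' : X, if f s x = m ∧ f s x' = m then 1 else 0 := Finset.sum_comm
      _ = ∑ s : S, if f s x = m then dS else 0 := by
          apply Finset.sum_congr rfl; intro s _
          by_cases h : f s x = m
          · simp only [h, true_and, if_true]
            rw [← Finset.card_filter, hf.regS m hm s]
          · simp [h]
      _ = (Finset.univ.filter fun s : S => f s x = m).card * dS := by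
          rw [Finset.sum_ite, Finset.sum_const, Finset.sum_const_zero, add_zero, smul_eq_mul]
      _ = dX * dS := by rw [hf.regX m hm x]
  have hrow : ∀ x : X, ∑ x' : X, Pm x x' = 1 := by
    intro x
    have h1 : ∑ x' : X, Pm x x'
        = ((∑ x' : X, ((Finset.univ.filter fun s : S => f s x = m ∧ f s x' = m).card : ℝ)))
          / (dS * dX) := by
      simp_rw [hPapp]; rw [Finset.sum_div]
    rw [h1, ← Nat.cast_sum, hrowNat x, Nat.cast_mul, mul_comm (dX:ℝ)]
    exact div_self (by positivity)
  have hcount : cS * dS = cX * dX := by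
    have h1 : ∑ s : S, (Finset.univ.filter fun x : X => f s x = m).card
        = ∑ x : X, (Finset.univ.filter fun s : S => f s x = m).card := by
      simp_rw [Finset.card_filter]; exact Finset.sum_comm
    have h2 : Fintype.card S * dS = Fintype.card X * dX := by
      have hl : ∑ s : S, (Finset.univ.filter fun x : X => f s x = m).card
          = Fintype.card S * dS := by
        rw [Finset.sum_congr rfl fun s _ => hf.regS m hm s, Finset.sum_const,
          Finset.card_univ, smul_eq_mul]
      have hr : ∑ x : X, (Finset.univ.filter fun s : S => f s x = m).card
          = Fintype.card X * dX := by
        rw [Finset.sum_congr rfl fun x _ => hf.regX m hm x, Finset.sum_const,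
          Finset.card_univ, smul_eq_mul]
      rw [← hl, ← hr, h1]
    rw [hcSdef, hcXdef]
    exact_mod_cast h2
  -- channel densities basics
  have hwt_meas : ∀ x : X, Measurable (wt x) := fun x =>
    ((hw_meas x).indicator (hTmeas x))
  have hwt0 : ∀ x z, 0 ≤ wt x z := by
    intro x z
    rw [hwtdef, restrictChan]
    exact Set.indicator_nonneg (fun z' _ => hw0 x z') z
  have hwtle : ∀ x z, wt x z ≤ w x z := by
    intro x z
    rw [hwtdef, restrictChan]
    exact Set.indicator_le_self' (fun z' _ => hw0 x z') z
  have hw_int : ∀ x : X, Integrable (w x) μ := by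
    intro x
    by_contra h
    have h1 := hw1 x
    rw [MeasureTheory.integral_undef h] at h1
    exact one_ne_zero h1.symm
  have hwt_int : ∀ x : X, Integrable (wt x) μ := by
    intro x
    refine (hw_int x).mono (hwt_meas x).aestronglyMeasurable (ae_of_all _ fun z => ?_)
    rw [Real.norm_eq_abs, Real.norm_eq_abs, abs_of_nonneg (hwt0 x z),
      abs_of_nonneg (hw0 x z)]
    exact hwtle x z
  have hq_app : ∀ z, q z = ∑ x : X, (1 / cX) * wt x z := by
    intro z; rw [hqdef]; rfl
  have hq0 : ∀ z, 0 ≤ q z := by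
    intro z; rw [hq_app]
    exact Finset.sum_nonneg fun x _ => mul_nonneg (by positivity) (hwt0 x z)
  have hq_meas : Measurable q := by
    rw [hqdef]
    exact Finset.measurable_sum _ fun x _ => ((hwt_meas x).const_mul _)
  have hq_int : Integrable q μ := by
    rw [hqdef]
    exact MeasureTheory.integrable_finset_sum _ fun x _ => ((hwt_int x).const_mul _)
  have hwtq : ∀ x z, wt x z ≤ cX * q z := by
    intro x z
    have h1 : (1 / cX) * wt x z ≤ q z := by
      rw [hq_app]
      exact Finset.single_le_sum (fun x' _ => mul_nonneg (by positivity) (hwt0 x' z))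
        (Finset.mem_univ x)
    calc wt x z = cX * ((1 / cX) * wt x z) := by field_simp
      _ ≤ cX * q z := by nlinarith [h1, hcX]
  have hqz0 : ∀ z, q z = 0 → ∀ x, wt x z = 0 := by
    intro z hz x
    have := hwtq x z
    rw [hz, mul_zero] at this
    exact le_antisymm this (hwt0 x z)
  -- p facts
  set a : S → X → ℝ := fun s x => if f s x = m then (1:ℝ) / dS else 0 with hadef
  have ha0 : ∀ s x, 0 ≤ a s x := by
    intro s x; rw [hadef]; dsimp only; split <;> positivity
  have hp_app : ∀ s z, p s z = ∑ x : X, a s x * wt x z := by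
    intro s z; rw [hpdef]; rfl
  have hp0 : ∀ s z, 0 ≤ p s z := by
    intro s z; rw [hp_app]
    exact Finset.sum_nonneg fun x _ => mul_nonneg (ha0 s x) (hwt0 x z)
  have hp_meas : ∀ s, Measurable (p s) := by
    intro s
    have : (fun z => ∑ x : X, a s x * wt x z) = p s := by
      ext z; rw [hp_app]
    rw [← this]
    exact Finset.measurable_sum _ fun x _ => ((hwt_meas x).const_mul _)
  have hp_int : ∀ s, Integrable (p s) μ := by
    intro s
    have : (fun z => ∑ x : X, a s x * wt x z) = p s := by
      ext z; rw [hp_app]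
    rw [← this]
    exact MeasureTheory.integrable_finset_sum _ fun x _ => ((hwt_int x).const_mul _)
  have hacoef : ∀ s, ∑ x : X, a s x = 1 := by
    intro s
    rw [hadef]
    dsimp only
    rw [Finset.sum_ite, Finset.sum_const, Finset.sum_const_zero, add_zero, nsmul_eq_mul,
      hf.regS m hm s]
    field_simp
  have hpq : ∀ s z, p s z ≤ cX * q z := by
    intro s z
    rw [hp_app]
    calc ∑ x : X, a s x * wt x z ≤ ∑ x : X, a s x * (cX * q z) :=
          Finset.sum_le_sum fun x _ => mul_le_mul_of_nonneg_left (hwtq x z) (ha0 s x)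
      _ = cX * q z := by rw [← Finset.sum_mul, hacoef s, one_mul]
  have hpz0 : ∀ z, q z = 0 → ∀ s, p s z = 0 := by
    intro z hz s
    have := hpq s z
    rw [hz, mul_zero] at this
    exact le_antisymm this (hp0 s z)
  -- integrability of the Rényi integrands
  have hratio_le : ∀ (g : Z → ℝ), (∀ z, 0 ≤ g z) → (∀ z, g z ≤ cX * q z) →
      ∀ z, 0 ≤ g z ^ 2 / q z ∧ g z ^ 2 / q z ≤ cX * g z := by
    intro g hg0 hgle z
    rcases eq_or_lt_of_le (hq0 z) with hz | hz
    · have hgz : g z = 0 := by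
        have := hgle z
        rw [← hz, mul_zero] at this
        exact le_antisymm this (hg0 z)
      rw [hgz]
      norm_num
    · constructor
      · positivity
      · rw [div_le_iff₀ hz]
        calc g z ^ 2 = g z * g z := sq (g z) ▸ rfl
          _ ≤ g z * (cX * q z) := mul_le_mul_of_nonneg_left (hgle z) (hg0 z)
          _ = cX * g z * q z := by ring
  have hint_ratio : ∀ (g : Z → ℝ), Measurable g → Integrable g μ → (∀ z, 0 ≤ g z) →
      (∀ z, g z ≤ cX * q z) → Integrable (fun z => g z ^ 2 / q z) μ := by
    intro g hgm hgi hg0 hgle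
    refine (hgi.const_mul cX).mono ((hgm.pow_const 2).div hq_meas).aestronglyMeasurable
      (ae_of_all _ fun z => ?_)
    obtain ⟨h1, h2⟩ := hratio_le g hg0 hgle z
    rw [Real.norm_eq_abs, Real.norm_eq_abs, abs_of_nonneg h1]
    exact le_trans h2 (le_abs_self _)
  have hIint : ∀ s, Integrable (fun z => p s z ^ 2 / q z) μ :=
    fun s => hint_ratio (p s) (hp_meas s) (hp_int s) (hp0 s) (hpq s)
  have hJint : ∀ x, Integrable (fun z => wt x z ^ 2 / q z) μ :=
    fun x => hint_ratio (wt x) (hwt_meas x) (hwt_int x) (hwt0 x) (hwtq x)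
  -- positivity of the integrals
  have hpos_ratio : ∀ (g : Z → ℝ), Measurable g → Integrable g μ → (∀ z, 0 ≤ g z) →
      (∀ z, g z ≤ cX * q z) → 0 < ∫ z, g z ∂μ → 0 < ∫ z, g z ^ 2 / q z ∂μ := by
    intro g hgm hgi hg0 hgle hgpos
    have hnn2 : ∀ z, 0 ≤ g z ^ 2 / q z := fun z => (hratio_le g hg0 hgle z).1
    rcases eq_or_lt_of_le (MeasureTheory.integral_nonneg (f := fun z => g z ^ 2 / q z) hnn2) with h0 | h0
    · exfalso
      have hae : (fun z => g z ^ 2 / q z) =ᵐ[μ] 0 :=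
        (MeasureTheory.integral_eq_zero_iff_of_nonneg hnn2
          (hint_ratio g hgm hgi hg0 hgle)).mp h0.symm
      have hgae : g =ᵐ[μ] 0 := by
        refine hae.mono fun z hz => ?_
        simp only [Pi.zero_apply] at hz ⊢
        rcases eq_or_lt_of_le (hq0 z) with hq' | hq'
        · have := hgle z
          rw [← hq', mul_zero] at this
          exact le_antisymm this (hg0 z)
        · rcases div_eq_zero_iff.mp hz with h | h
          · exact pow_eq_zero_iff (n := 2) (by norm_num) |>.mp h
          · exact absurd h hq'.ne'
      rw [MeasureTheory.integral_congr_ae hgae] at hgpos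
      simp at hgpos
    · exact h0
  have hpint_pos : ∀ s, 0 < ∫ z, p s z ∂μ := by
    intro s
    have h1 : ∫ z, p s z ∂μ = ∑ x : X, a s x * ∫ z, wt x z ∂μ := by
      have he : (fun z => ∑ x : X, a s x * wt x z) = p s := by
        ext z; rw [hp_app]
      rw [← he, MeasureTheory.integral_finset_sum _
        (fun x _ => (hwt_int x).const_mul _)]
      exact Finset.sum_congr rfl fun x _ => MeasureTheory.integral_const_mul _ _
    rw [h1]
    have hAne : (Finset.univ.filter fun x : X => f s x = m).Nonempty := by
      rw [← Finset.card_pos, hf.regS m hm s]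
      exact hf.dS_pos
    obtain ⟨x₀, hx₀⟩ := hAne
    refine Finset.sum_pos' (fun x _ => mul_nonneg (ha0 s x) (le_of_lt (hTpos x))) ⟨x₀,
      Finset.mem_univ x₀, ?_⟩
    have hax₀ : a s x₀ = 1 / dS := by
      rw [hadef]; dsimp only
      rw [if_pos (Finset.mem_filter.mp hx₀).2]
    rw [hax₀]
    exact mul_pos (by positivity) (hTpos x₀)
  have hIpos : ∀ s, 0 < ∫ z, p s z ^ 2 / q z ∂μ :=
    fun s => hpos_ratio (p s) (hp_meas s) (hp_int s) (hp0 s) (hpq s) (hpint_pos s)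
  have hJpos : ∀ x, 0 < ∫ z, wt x z ^ 2 / q z ∂μ :=
    fun x => hpos_ratio (wt x) (hwt_meas x) (hwt_int x) (hwt0 x) (hwtq x) (hTpos x)
  -- evaluate conditional Rényi divergences
  have hnull : ∀ (g : Z → ℝ), (∀ z, q z = 0 → g z = 0) → μ {z | q z = 0 ∧ 0 < g z} = 0 := by
    intro g hg
    have he : {z | q z = 0 ∧ 0 < g z} = ∅ := by
      ext z
      simp only [Set.mem_setOf_eq, Set.mem_empty_iff_false, iff_false, not_and]
      intro h1
      rw [hg z h1]
      exact lt_irrefl 0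
    rw [he]
    exact measure_empty
  set I : S → ℝ := fun s => ∫ z, p s z ^ 2 / q z ∂μ with hIdef
  set J : X → ℝ := fun x => ∫ z, wt x z ^ 2 / q z ∂μ with hJdef
  set L : ℝ := ∑ s : S, (1 / cS) * I s with hLdef
  set Aq : ℝ := ∑ x : X, (1 / cX) * J x with hAqdef
  have hAq0 : 0 ≤ Aq := by
    rw [hAqdef]
    exact Finset.sum_nonneg fun x _ => mul_nonneg (by positivity) (le_of_lt (hJpos x))
  have hunifS : ∀ s : S, unif S s = 1 / cS := fun s => rfl
  have hunifX : ∀ x : X, unif X x = 1 / cX := fun x => rfl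
  have hLHS : exp2 (condRenyi2 μ (unif S) p q) = ENNReal.ofReal L := by
    rw [condRenyi2, exp2_log2E]
    have hterm : ∀ s : S, ENNReal.ofReal (unif S s) * exp2 (renyi2Div μ (p s) q)
        = ENNReal.ofReal ((1 / cS) * I s) := by
      intro s
      rw [hunifS, exp2_renyi2Div μ (p s) q (hnull (p s) (fun z hz => hpz0 z hz s))
        (hIint s) (hIpos s), ← ENNReal.ofReal_mul (by positivity)]
    rw [Finset.sum_congr rfl (fun s _ => hterm s), hLdef,
      ENNReal.ofReal_sum_of_nonneg (fun s _ => mul_nonneg (by positivity)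
        (le_of_lt (hIpos s)))]
  have hRHS : exp2 (condRenyi2 μ (unif X) wt q) = ENNReal.ofReal Aq := by
    rw [condRenyi2, exp2_log2E]
    have hterm : ∀ x : X, ENNReal.ofReal (unif X x) * exp2 (renyi2Div μ (wt x) q)
        = ENNReal.ofReal ((1 / cX) * J x) := by
      intro x
      rw [hunifX, exp2_renyi2Div μ (wt x) q (hnull (wt x) (fun z hz => hqz0 z hz x))
        (hJint x) (hJpos x), ← ENNReal.ofReal_mul (by positivity)]
    rw [Finset.sum_congr rfl (fun x _ => hterm x), hAqdef,
      ENNReal.ofReal_sum_of_nonneg (fun x _ => mul_nonneg (by positivity)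
        (le_of_lt (hJpos x)))]
  rw [hLHS, hRHS]
  have key : L ≤ 1 + lam * Aq := by
    have hsec : secondEVmod Pm = lam := by rw [hlamdef, lam2, hPdef]
    have hXpos : 0 < Fintype.card X := Fintype.card_pos_iff.mpr hX
    -- integral of q
    have hq_int_eq : ∫ z, q z ∂μ = ∑ x : X, (1 / cX) * ∫ z, wt x z ∂μ := by
      have he : (fun z => ∑ x : X, (1 / cX) * wt x z) = q := by
        ext z; rw [hq_app]
      rw [← he, MeasureTheory.integral_finset_sum _ (fun x _ => (hwt_int x).const_mul _)]
      exact Finset.sum_congr rfl fun x _ => MeasureTheory.integral_const_mul _ _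
    have hq_le_one : ∫ z, q z ∂μ ≤ 1 := by
      rw [hq_int_eq]
      have h1 : ∀ x : X, ∫ z, wt x z ∂μ ≤ 1 := by
        intro x
        rw [← hw1 x]
        exact MeasureTheory.integral_mono (hwt_int x) (hw_int x) (hwtle x)
      calc ∑ x : X, (1 / cX) * ∫ z, wt x z ∂μ ≤ ∑ x : X, (1 / cX) * 1 :=
            Finset.sum_le_sum fun x _ => mul_le_mul_of_nonneg_left (h1 x) (by positivity)
        _ = 1 := by
            rw [Finset.sum_const, Finset.card_univ, nsmul_eq_mul, mul_one, hcXdef]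
            field_simp
    have hq_int_nonneg : 0 ≤ ∫ z, q z ∂μ := MeasureTheory.integral_nonneg hq0
    -- coefficient identity
    have hcoefsum : ∀ x x' : X, (1 / cS) * (∑ s : S, a s x * a s x') = (1 / cX) * Pm x x' := by
      intro x x'
      have h1 : ∑ s : S, a s x * a s x'
          = ((Finset.univ.filter fun s : S => f s x = m ∧ f s x' = m).card : ℝ)
            * (1 / dS * (1 / dS)) := by
        have he : (fun s : S => a s x * a s x')
            = fun s : S => if f s x = m ∧ f s x' = m then 1 / (dS:ℝ) * (1 / dS) else 0 := by
          funext s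
          rw [hadef]
          dsimp only
          by_cases h1 : f s x = m <;> by_cases h2 : f s x' = m <;> simp [h1, h2]
        rw [he, Finset.sum_ite, Finset.sum_const, Finset.sum_const_zero, add_zero,
          nsmul_eq_mul]
      rw [h1, hPapp]
      have h2 : cS * dS = cX * dX := hcount
      have h3 : cS = cX * (dX:ℝ) / dS := by
        field_simp at h2 ⊢
        linarith
      rw [h3]
      field_simp
    -- pointwise inequality
    have hptw : ∀ z, (∑ s : S, (1 / cS) * (p s z ^ 2 / q z))
        ≤ q z + lam * ((∑ x : X, (1 / cX) * (wt x z ^ 2 / q z)) - q z) := by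
      intro z
      rcases eq_or_lt_of_le (hq0 z) with hz | hz
      · have hwt' : ∀ x, wt x z = 0 := hqz0 z hz.symm
        have hp' : ∀ s, p s z = 0 := hpz0 z hz.symm
        simp [hp', hwt', ← hz]
      · have hQF := quadform_bound Pm hsym hnn hrow hXpos (fun x => wt x z)
        rw [hsec] at hQF
        have hsv : ∑ x : X, wt x z = cX * q z := by
          rw [hq_app, ← Finset.mul_sum]
          field_simp
        have hmv : ∀ x : X, Pm.mulVec (fun x' => wt x' z) x = ∑ x' : X, Pm x x' * wt x' z := by
          intro x; simp [Matrix.mulVec, dotProduct]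
        have claim1 : ∑ s : S, (1 / cS) * p s z ^ 2
            = (1 / cX) * ∑ x : X, wt x z * Pm.mulVec (fun x' => wt x' z) x := by
          calc ∑ s : S, (1 / cS) * p s z ^ 2
              = ∑ s : S, ∑ x : X, ∑ x' : X,
                  (1 / cS) * ((a s x * a s x') * (wt x z * wt x' z)) := by
                apply Finset.sum_congr rfl; intro s _
                rw [hp_app, sq, Finset.sum_mul_sum, Finset.mul_sum]
                apply Finset.sum_congr rfl; intro x _
                rw [Finset.mul_sum]
                apply Finset.sum_congr rfl; intro x' _
                ring
            _ = ∑ x : X, ∑ x' : X, ∑ s : S,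
                  (1 / cS) * ((a s x * a s x') * (wt x z * wt x' z)) := by
                rw [Finset.sum_comm]
                apply Finset.sum_congr rfl; intro x _
                rw [Finset.sum_comm]
            _ = ∑ x : X, ∑ x' : X, ((1 / cS) * (∑ s : S, a s x * a s x'))
                  * (wt x z * wt x' z) := by
                apply Finset.sum_congr rfl; intro x _
                apply Finset.sum_congr rfl; intro x' _
                simp only [Finset.mul_sum, Finset.sum_mul]
                apply Finset.sum_congr rfl; intro s _
                ring
            _ = ∑ x : X, ∑ x' : X, ((1 / cX) * Pm x x') * (wt x z * wt x' z) := by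
                apply Finset.sum_congr rfl; intro x _
                apply Finset.sum_congr rfl; intro x' _
                rw [hcoefsum]
            _ = (1 / cX) * ∑ x : X, wt x z * Pm.mulVec (fun x' => wt x' z) x := by
                rw [Finset.mul_sum]
                apply Finset.sum_congr rfl; intro x _
                rw [hmv x]
                simp only [Finset.mul_sum, Finset.sum_mul]
                apply Finset.sum_congr rfl; intro x' _
                ring
        have claim0 : ∑ s : S, (1 / cS) * (p s z ^ 2 / q z)
            = (∑ s : S, (1 / cS) * p s z ^ 2) / q z := by
          rw [Finset.sum_div]
          apply Finset.sum_congr rfl; intro s _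
          rw [mul_div_assoc]
        have claim2 : (∑ x : X, (1 / cX) * (wt x z ^ 2 / q z))
            = ((1 / cX) * ∑ x : X, wt x z ^ 2) / q z := by
          rw [Finset.mul_sum, Finset.sum_div]
          apply Finset.sum_congr rfl; intro x _
          rw [mul_div_assoc]
        have hRHSeq : q z + lam * (((1 / cX) * ∑ x : X, wt x z ^ 2) / q z - q z)
            = ((1 / cX) * ((∑ x : X, wt x z) ^ 2 / cX
              + lam * ((∑ x : X, wt x z ^ 2) - (∑ x : X, wt x z) ^ 2 / cX))) / q z := by
          rw [hsv]
          field_simp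
        rw [claim0, claim2, claim1, hRHSeq]
        refine (div_le_div_iff_of_pos_right hz).mpr ?_
        exact mul_le_mul_of_nonneg_left hQF (by positivity)
    -- integrate the pointwise inequality
    have hlhs_int : Integrable (fun z => ∑ s : S, (1 / cS) * (p s z ^ 2 / q z)) μ :=
      MeasureTheory.integrable_finset_sum _ fun s _ => ((hIint s).const_mul _)
    have hg_int : Integrable (fun z => ∑ x : X, (1 / cX) * (wt x z ^ 2 / q z)) μ :=
      MeasureTheory.integrable_finset_sum _ fun x _ => ((hJint x).const_mul _)
    have hrhs_int : Integrable
        (fun z => q z + lam * ((∑ x : X, (1 / cX) * (wt x z ^ 2 / q z)) - q z)) μ :=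
      hq_int.add ((hg_int.sub hq_int).const_mul lam)
    have hLeq : L = ∫ z, ∑ s : S, (1 / cS) * (p s z ^ 2 / q z) ∂μ := by
      rw [MeasureTheory.integral_finset_sum _ (fun s _ => (hIint s).const_mul _), hLdef]
      exact Finset.sum_congr rfl fun s _ => (MeasureTheory.integral_const_mul _ _).symm
    have hAqeq : ∫ z, (∑ x : X, (1 / cX) * (wt x z ^ 2 / q z)) ∂μ = Aq := by
      rw [MeasureTheory.integral_finset_sum _ (fun x _ => (hJint x).const_mul _), hAqdef]
      exact Finset.sum_congr rfl fun x _ => MeasureTheory.integral_const_mul _ _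
    have hsub_int : Integrable (fun z => (∑ x : X, (1 / cX) * (wt x z ^ 2 / q z)) - q z) μ :=
      hg_int.sub hq_int
    have hmul_int : Integrable
        (fun z => lam * ((∑ x : X, (1 / cX) * (wt x z ^ 2 / q z)) - q z)) μ :=
      hsub_int.const_mul lam
    have hInt2 : ∫ z, (q z + lam * ((∑ x : X, (1 / cX) * (wt x z ^ 2 / q z)) - q z)) ∂μ
        = (∫ z, q z ∂μ) + lam * (Aq - ∫ z, q z ∂μ) := by
      rw [MeasureTheory.integral_add hq_int hmul_int,
        MeasureTheory.integral_const_mul, MeasureTheory.integral_sub hg_int hq_int, hAqeq]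
    have hmono := MeasureTheory.integral_mono hlhs_int hrhs_int hptw
    rw [hInt2] at hmono
    rw [hLeq]
    nlinarith [hmono, hAq0,
      mul_nonneg (by linarith : (0:ℝ) ≤ 1 - lam) (by linarith [hq_le_one] :
        (0:ℝ) ≤ 1 - ∫ z, q z ∂μ), hq_int_nonneg, hlam0]
  calc ENNReal.ofReal L ≤ ENNReal.ofReal (1 + lam * Aq) := ENNReal.ofReal_le_ofReal key
    _ = ENNReal.ofReal 1 + ENNReal.ofReal (lam * Aq) :=
        ENNReal.ofReal_add (by norm_num) (mul_nonneg hlam0 hAq0)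
    _ = 1 + ENNReal.ofReal lam * ENNReal.ofReal Aq := by
        rw [ENNReal.ofReal_one, ENNReal.ofReal_mul hlam0]

end
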